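/- Let T be a graph, α a layout of T of bandwidth at most b, and let Π be a k-gate in T with center c (a star with 2(b−k) leaves embedded in T, with designated leaves in and out) such that k paths P¹,...,Pᵏ, disjoint from Π and from each other, each pass through the gate with respect to α. Then the interval B = [α(c)−b, α(c)+b] contains α(N[c]) and is contained in α(∪Pⁱ ∪ N[c]); moreover each Pⁱ has exactly one vertex mapped to [α(c)−b, α(c)) and exactly one mapped to (α(c), α(c)+b]. -/

import Mathlib

lemma cross_aux {V : Type} {G : SimpleGraph V} (f : V → ℤ) (t : ℤ) :
    ∀ {x y : V} (W : G.Walk x y), (∀ w ∈ W.support, f w ≠ t) → f x < t → t < f y →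
    ∃ u v, G.Adj u v ∧ u ∈ W.support ∧ v ∈ W.support ∧ f u < t ∧ t < f v := by
  intro x y W
  induction W with
  | nil => intro _ h1 h2; exact absurd (h1.trans h2) (lt_irrefl _)
  | @cons x x' y h W ih =>
    intro hne h1 h2
    by_cases hm : t < f x'
    · exact ⟨x, x', h, by simp, by simp, h1, hm⟩
    · have hx' : f x' < t := lt_of_le_of_ne (not_lt.mp hm)
        (hne x' (by simp [SimpleGraph.Walk.support_cons]))
      obtain ⟨u, v, hadj, hu, hv, h3, h4⟩ := ih
        (fun w hw => hne w (by simp [SimpleGraph.Walk.support_cons, hw])) hx' h2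
      exact ⟨u, v, hadj, by simp [SimpleGraph.Walk.support_cons, hu],
        by simp [SimpleGraph.Walk.support_cons, hv], h3, h4⟩

lemma walk_seg {V : Type} [DecidableEq V] {G : SimpleGraph V} {x y : V} (p : G.Walk x y)
    (u v : V) (hu : u ∈ p.support) (hv : v ∈ p.support) :
    ∃ W : G.Walk u v, ∀ w ∈ W.support, w ∈ p.support := by
  by_cases hvd : v ∈ (p.dropUntil u hu).support
  · exact ⟨(p.dropUntil u hu).takeUntil v hvd, fun w hw =>
      SimpleGraph.Walk.support_dropUntil_subset p hu
        (SimpleGraph.Walk.support_takeUntil_subset _ hvd hw)⟩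
  · have key : p.support = (p.takeUntil u hu).support ++ (p.dropUntil u hu).support.tail := by
      rw [← SimpleGraph.Walk.support_append, SimpleGraph.Walk.take_spec]
    rw [key, List.mem_append] at hv
    have hvt : v ∈ (p.takeUntil u hu).support := by
      rcases hv with hv | hv
      · exact hv
      · exact absurd (List.mem_of_mem_tail hv) hvd
    have hvr : v ∈ (p.takeUntil u hu).reverse.support := by
      rw [SimpleGraph.Walk.support_reverse]; exact List.mem_reverse.mpr hvt
    exact ⟨((p.takeUntil u hu).reverse).takeUntil v hvr, fun w hw => by
      have := SimpleGraph.Walk.support_takeUntil_subset _ hvr hw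
      rw [SimpleGraph.Walk.support_reverse, List.mem_reverse] at this
      exact SimpleGraph.Walk.support_takeUntil_subset p hu this⟩



/-- `layoutBandwidthLE G α b` means the layout `α` of `G` has bandwidth at most `b`. -/
def layoutBandwidthLE {V : Type} [Fintype V] (G : SimpleGraph V)
    (α : V ≃ Fin (Fintype.card V)) (b : ℕ) : Prop :=
  ∀ u v : V, G.Adj u v → |(α u : ℤ) - (α v : ℤ)| ≤ (b : ℤ)

/-- The inclusion interval `I(S) = [min α(S), max α(S)]` of a vertex set `S` under a layout. -/
noncomputable def inclInterval {V : Type} [Fintype V] (α : V ≃ Fin (Fintype.card V))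
    (S : Set V) : Set ℕ :=
  Set.Icc (sInf ((fun x => (α x : ℕ)) '' S)) (sSup ((fun x => (α x : ℕ)) '' S))

/-- The gate lemma: if a `k`-gate with center `c` and leaf set `L` (`|L| = 2(b-k)`,
`N(c) = L`) is embedded in `T`, and `k` pairwise disjoint paths, disjoint from the
gate, each pass through the gate in a bandwidth-`b` layout `α`, then with
`B = [α c - b, α c + b]` : `α(N[c]) ⊆ B`, `B ⊆ α(⋃ Pⁱ ∪ N[c])`, and each path has
exactly one vertex mapped into `[α c - b, α c)` and exactly one into `(α c, α c + b]`. -/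
theorem gate_lemma {V : Type} [Fintype V] (T : SimpleGraph V) (b k : ℕ)
    (α : V ≃ Fin (Fintype.card V)) (hα : layoutBandwidthLE T α b)
    (c : V) (L : Finset V) (hL : L.card = 2 * (b - k))
    (hNc : T.neighborSet c = (↑L : Set V))
    (xs ys : Fin k → V) (P : ∀ i, T.Walk (xs i) (ys i)) (hP : ∀ i, (P i).IsPath)
    (hPdisj : ∀ i j, i ≠ j → ∀ w, w ∈ (P i).support → w ∉ (P j).support)
    (hPgate : ∀ i, ∀ w ∈ (P i).support, w ≠ c ∧ w ∉ L)
    (hpass : ∀ i, inclInterval α (insert c (↑L : Set V)) ⊆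
        inclInterval α {w | w ∈ (P i).support}) :
    (∀ x ∈ insert c (↑L : Set V),
        (α x : ℤ) ∈ Set.Icc ((α c : ℤ) - (b : ℤ)) ((α c : ℤ) + (b : ℤ))) ∧
    (∀ q : ℤ, q ∈ Set.Icc ((α c : ℤ) - (b : ℤ)) ((α c : ℤ) + (b : ℤ)) →
        ∃ x : V, (x ∈ insert c (↑L : Set V) ∨ ∃ i, x ∈ (P i).support) ∧ (α x : ℤ) = q) ∧
    (∀ i, (∃! w : V, w ∈ (P i).support ∧
            (α w : ℤ) ∈ Set.Ico ((α c : ℤ) - (b : ℤ)) (α c : ℤ)) ∧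
          (∃! w : V, w ∈ (P i).support ∧
            (α w : ℤ) ∈ Set.Ioc (α c : ℤ) ((α c : ℤ) + (b : ℤ)))) := by
  classical
  set ac : ℤ := ((α c : ℕ) : ℤ) with hac
  have hinj : Function.Injective (fun x : V => ((α x : ℕ) : ℤ)) := by
    intro a a' h
    apply α.injective
    have h' : ((α a : ℕ) : ℤ) = ((α a' : ℕ) : ℤ) := h
    exact Fin.ext (by exact_mod_cast h')
  have hcL : c ∉ L := by
    intro hc
    have : c ∈ T.neighborSet c := by rw [hNc]; exact_mod_cast hc
    exact T.irrefl this
  have claim1 : ∀ x ∈ insert c (↑L : Set V),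
      (α x : ℤ) ∈ Set.Icc (ac - (b : ℤ)) (ac + (b : ℤ)) := by
    intro x hx
    rcases hx with rfl | hx
    · constructor <;> omega
    · have hadj : T.Adj c x := by
        rw [← SimpleGraph.mem_neighborSet, hNc]; exact hx
      have h := abs_le.mp (hα c x hadj)
      constructor
      · linarith [h.2]
      · linarith [h.1]
  -- crossing vertices for each path
  have cross : ∀ i, ∃ u v, u ∈ (P i).support ∧ v ∈ (P i).support ∧
      (α u : ℤ) ∈ Set.Ico (ac - (b : ℤ)) ac ∧
      (α v : ℤ) ∈ Set.Ioc ac (ac + (b : ℤ)) := by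
    intro i
    have hne_t : ∀ w ∈ (P i).support, ((α w : ℕ) : ℤ) ≠ ac := by
      intro w hw h
      exact (hPgate i w hw).1 (hinj h)
    have hc_mem : (α c : ℕ) ∈ inclInterval α (insert c (↑L : Set V)) := by
      have hmem : (α c : ℕ) ∈ (fun x => (α x : ℕ)) '' (insert c (↑L : Set V)) :=
        ⟨c, Set.mem_insert _ _, rfl⟩
      exact ⟨Nat.sInf_le hmem, le_csSup (Set.Finite.bddAbove (Set.toFinite _)) hmem⟩
    obtain ⟨hlo, hhi⟩ := hpass i hc_mem
    have hneS : ((fun x => (α x : ℕ)) '' {w | w ∈ (P i).support}).Nonempty :=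
      ⟨_, ⟨xs i, (P i).start_mem_support, rfl⟩⟩
    obtain ⟨u0, hu0, hu0eq⟩ := Nat.sInf_mem hneS
    obtain ⟨v0, hv0, hv0eq⟩ := Set.Nonempty.csSup_mem hneS (Set.toFinite _)
    have hu0lt : ((α u0 : ℕ) : ℤ) < ac := by
      have h1 : (α u0 : ℕ) ≤ (α c : ℕ) := hu0eq.trans_le hlo
      have h2 : ((α u0 : ℕ) : ℤ) ≠ ac := hne_t u0 hu0
      omega
    have hv0gt : ac < ((α v0 : ℕ) : ℤ) := by
      have h1 : (α c : ℕ) ≤ (α v0 : ℕ) := hhi.trans_eq hv0eq.symm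
      have h2 : ((α v0 : ℕ) : ℤ) ≠ ac := hne_t v0 hv0
      omega
    obtain ⟨W, hW⟩ := walk_seg (P i) u0 v0 hu0 hv0
    obtain ⟨u, v, hadj, hu, hv, hult, hvgt⟩ :=
      cross_aux (fun x => ((α x : ℕ) : ℤ)) ac W
        (fun w hw => hne_t w (hW w hw)) hu0lt hv0gt
    have hband := abs_le.mp (hα u v hadj)
    refine ⟨u, v, hW u hu, hW v hv, ⟨by omega, hult⟩, hvgt, by omega⟩
  choose u v hu hv huI hvI using cross
  -- counting
  set Q : Fin k → Finset V := fun i =>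
    ((P i).support.toFinset).filter
      (fun x => (α x : ℤ) ∈ Set.Icc (ac - (b : ℤ)) (ac + (b : ℤ))) with hQdef
  have hmemQ : ∀ i x, x ∈ Q i ↔ x ∈ (P i).support ∧
      (α x : ℤ) ∈ Set.Icc (ac - (b : ℤ)) (ac + (b : ℤ)) := by
    intro i x; simp [hQdef]
  have huQ : ∀ i, u i ∈ Q i := fun i => (hmemQ i _).mpr
    ⟨hu i, ⟨(huI i).1, le_of_lt (lt_of_lt_of_le (huI i).2 (by omega))⟩⟩
  have hvQ : ∀ i, v i ∈ Q i := fun i => (hmemQ i _).mpr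
    ⟨hv i, ⟨le_of_lt (lt_of_le_of_lt (by omega : ac - (b:ℤ) ≤ ac) (hvI i).1), (hvI i).2⟩⟩
  have huvne : ∀ i, u i ≠ v i := by
    intro i h
    have h1 := (huI i).2
    have h2 := (hvI i).1
    rw [h] at h1
    omega
  have hQ2 : ∀ i, 2 ≤ (Q i).card := by
    intro i
    have hsub : ({u i, v i} : Finset V) ⊆ Q i := by
      intro x hx
      rcases Finset.mem_insert.mp hx with rfl | hx
      · exact huQ i
      · rw [Finset.mem_singleton.mp hx]; exact hvQ i
    calc 2 = ({u i, v i} : Finset V).card := (Finset.card_pair (huvne i)).symm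
      _ ≤ (Q i).card := Finset.card_le_card hsub
  set G0 : Finset V := insert c L with hG0def
  have hG0card : G0.card = 2 * (b - k) + 1 := by
    rw [hG0def, Finset.card_insert_of_notMem hcL, hL]
  have hdisjG0Q : ∀ i, Disjoint G0 (Q i) := by
    intro i
    rw [Finset.disjoint_left]
    intro x hxG hxQ
    have hxP := ((hmemQ i x).mp hxQ).1
    rcases Finset.mem_insert.mp hxG with rfl | hxL
    · exact (hPgate i x hxP).1 rfl
    · exact (hPgate i x hxP).2 hxL
  have hdisjQ : ∀ i ∈ (Finset.univ : Finset (Fin k)), ∀ j ∈ Finset.univ, i ≠ j →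
      Disjoint (Q i) (Q j) := by
    intro i _ j _ hij
    rw [Finset.disjoint_left]
    intro x hxQi hxQj
    exact hPdisj i j hij x ((hmemQ i x).mp hxQi).1 ((hmemQ j x).mp hxQj).1
  set U : Finset V := G0 ∪ Finset.univ.biUnion Q with hUdef
  have hUcard : U.card = G0.card + ∑ i, (Q i).card := by
    rw [hUdef, Finset.card_union_of_disjoint, Finset.card_biUnion hdisjQ]
    rw [Finset.disjoint_right]
    intro x hx
    obtain ⟨i, _, hxQ⟩ := Finset.mem_biUnion.mp hx
    exact fun hxG => (Finset.disjoint_left.mp (hdisjG0Q i)) hxG hxQ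
  have himgsub : U.image (fun x => ((α x : ℕ) : ℤ)) ⊆
      Finset.Icc (ac - (b : ℤ)) (ac + (b : ℤ)) := by
    intro q hq
    obtain ⟨x, hxU, rfl⟩ := Finset.mem_image.mp hq
    rw [Finset.mem_Icc]
    rcases Finset.mem_union.mp hxU with hxG | hxB
    · have := claim1 x (by
        rcases Finset.mem_insert.mp hxG with rfl | hxL
        · exact Set.mem_insert _ _
        · exact Set.mem_insert_of_mem _ hxL)
      exact this
    · obtain ⟨i, _, hxQ⟩ := Finset.mem_biUnion.mp hxB
      exact ((hmemQ i x).mp hxQ).2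
  have hIcc_card : (Finset.Icc (ac - (b : ℤ)) (ac + (b : ℤ))).card = 2 * b + 1 := by
    rw [Int.card_Icc]; omega
  have hUle : U.card ≤ 2 * b + 1 := by
    calc U.card = (U.image (fun x => ((α x : ℕ) : ℤ))).card :=
          (Finset.card_image_of_injective U hinj).symm
      _ ≤ _ := Finset.card_le_card himgsub
      _ = 2 * b + 1 := hIcc_card
  have hsumge : 2 * k ≤ ∑ i, (Q i).card := by
    calc 2 * k = ∑ _i : Fin k, 2 := by simp [Finset.sum_const, mul_comm]
      _ ≤ ∑ i, (Q i).card := Finset.sum_le_sum (fun i _ => hQ2 i)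
  have hsumeq : ∑ i, (Q i).card = 2 * k ∧ U.card = 2 * b + 1 := by
    constructor <;> omega
  have hQcard : ∀ i, (Q i).card = 2 := by
    by_contra hcon
    push_neg at hcon
    obtain ⟨i0, hi0⟩ := hcon
    have : (2 : ℕ) < (Q i0).card := lt_of_le_of_ne (hQ2 i0) (Ne.symm hi0)
    have : ∑ _i : Fin k, 2 < ∑ i, (Q i).card :=
      Finset.sum_lt_sum (fun i _ => hQ2 i) ⟨i0, Finset.mem_univ _, this⟩
    simp [Finset.sum_const, mul_comm] at this
    omega
  have hQeq : ∀ i, Q i = {u i, v i} := by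
    intro i
    refine (Finset.eq_of_subset_of_card_le ?_ ?_).symm
    · intro x hx
      rcases Finset.mem_insert.mp hx with rfl | hx
      · exact huQ i
      · rw [Finset.mem_singleton.mp hx]; exact hvQ i
    · rw [hQcard i, Finset.card_pair (huvne i)]
  refine ⟨claim1, ?_, ?_⟩
  · -- claim 2
    intro q hq
    have himgeq : U.image (fun x => ((α x : ℕ) : ℤ)) =
        Finset.Icc (ac - (b : ℤ)) (ac + (b : ℤ)) := by
      apply Finset.eq_of_subset_of_card_le himgsub
      rw [hIcc_card, Finset.card_image_of_injective U hinj]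
      omega
    have hqmem : q ∈ U.image (fun x => ((α x : ℕ) : ℤ)) := by
      rw [himgeq, Finset.mem_Icc]; exact hq
    obtain ⟨x, hxU, hxeq⟩ := Finset.mem_image.mp hqmem
    refine ⟨x, ?_, hxeq⟩
    rcases Finset.mem_union.mp hxU with hxG | hxB
    · left
      rcases Finset.mem_insert.mp hxG with rfl | hxL
      · exact Set.mem_insert _ _
      · exact Set.mem_insert_of_mem _ hxL
    · right
      obtain ⟨i, _, hxQ⟩ := Finset.mem_biUnion.mp hxB
      exact ⟨i, ((hmemQ i x).mp hxQ).1⟩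
  · -- claim 3
    intro i
    constructor
    · refine ⟨u i, ⟨hu i, huI i⟩, ?_⟩
      intro w ⟨hwP, hwI⟩
      have hwQ : w ∈ Q i := (hmemQ i w).mpr
        ⟨hwP, ⟨hwI.1, le_of_lt (lt_of_lt_of_le hwI.2 (by omega))⟩⟩
      rw [hQeq i] at hwQ
      rcases Finset.mem_insert.mp hwQ with rfl | hwv
      · rfl
      · rw [Finset.mem_singleton.mp hwv] at hwI
        have := (hvI i).1
        have := hwI.2
        omega
    · refine ⟨v i, ⟨hv i, hvI i⟩, ?_⟩
      intro w ⟨hwP, hwI⟩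
      have hwQ : w ∈ Q i := (hmemQ i w).mpr
        ⟨hwP, ⟨le_of_lt (lt_of_le_of_lt (by omega : ac - (b:ℤ) ≤ ac) hwI.1), hwI.2⟩⟩
      rw [hQeq i] at hwQ
      rcases Finset.mem_insert.mp hwQ with rfl | hwv
      · have := (huI i).2
        have := hwI.1
        omega
      · exact Finset.mem_singleton.mp hwv
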